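/- arXiv:2501.17370 — 2 statements merged into one kernel-verified Lean document; each statement's English description precedes it below -/
import Mathlib

section
/- For every r with 1 ≤ r < R_I, if U_{r+1} = U_r then H_{r+1} ≥ (5/4)·H_r. -/
open Matrix

noncomputable section

/-- The probability simplex of design weights over the arm set `X`. -/
def designSimplex {d : ℕ} (X : Finset (Fin d → ℝ)) : Set ((Fin d → ℝ) → ℝ) :=
  {l | (∀ x, 0 ≤ l x) ∧ ∑ x ∈ X, l x = 1}

/-- The design matrix `A(λ) = ∑_{x ∈ X} λ_x x xᵀ`. -/
def designMat {d : ℕ} (X : Finset (Fin d → ℝ)) (l : (Fin d → ℝ) → ℝ) :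
    Matrix (Fin d) (Fin d) ℝ :=
  ∑ x ∈ X, l x • Matrix.vecMulVec x x

/-- The quadratic form `y ↦ yᵀ A(λ)⁻¹ y`. -/
def quadInv {d : ℕ} (X : Finset (Fin d → ℝ)) (l : (Fin d → ℝ) → ℝ)
    (y : Fin d → ℝ) : ℝ :=
  y ⬝ᵥ (designMat X l)⁻¹.mulVec y

/-- The optimal design value `ρ(A) = inf_{λ : A(λ) invertible} max_{y ∈ A} yᵀA(λ)⁻¹y`
(the maximum over the empty set being `0`). -/
def rho {d : ℕ} (X : Finset (Fin d → ℝ)) (A : Set (Fin d → ℝ)) : ℝ :=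
  sInf {v | ∃ l ∈ designSimplex X, IsUnit (designMat X l).det ∧
    v = sSup (insert 0 (quadInv X l '' A))}

/-- `𝒴(S) = {x - x' : x, x' ∈ S, x ≠ x'}`. -/
def Yset {d : ℕ} (S : Set (Fin d → ℝ)) : Set (Fin d → ℝ) :=
  {y | ∃ x ∈ S, ∃ x' ∈ S, x ≠ x' ∧ y = x - x'}

/-- `𝒴*(S) = {x* - x : x ∈ S, x ≠ x*}`. -/
def YstarSet {d : ℕ} (xstar : Fin d → ℝ) (S : Set (Fin d → ℝ)) : Set (Fin d → ℝ) :=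
  (fun x => xstar - x) '' (S \ {xstar})

/-- `ψ* = inf_{λ : A(λ) invertible} max_{x ∈ X, x ≠ x*} (x-x*)ᵀA(λ)⁻¹(x-x*)/Δ_x²`. -/
def psiStar {d : ℕ} (X : Finset (Fin d → ℝ)) (θstar xstar : Fin d → ℝ) : ℝ :=
  sInf {v | ∃ l ∈ designSimplex X, IsUnit (designMat X l).det ∧
    v = sSup (insert 0
      ((fun x => quadInv X l (x - xstar) / (θstar ⬝ᵥ (xstar - x)) ^ 2) ''
        ((X : Set (Fin d → ℝ)) \ {xstar})))}

/-! ### Auxiliary lemmas -/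

lemma aux_sSup_insert_zero_nonneg (S : Set ℝ) : 0 ≤ sSup (insert 0 S) := by
  by_cases h : BddAbove (insert 0 S)
  · exact le_csSup h (Set.mem_insert 0 S)
  · rw [csSup_of_not_bddAbove h, Real.sSup_empty]

lemma aux_rho_nonneg {d : ℕ} (X : Finset (Fin d → ℝ)) (A : Set (Fin d → ℝ)) :
    0 ≤ rho X A := by
  apply Real.sInf_nonneg
  rintro v ⟨l, hl, hdet, rfl⟩
  exact aux_sSup_insert_zero_nonneg _

lemma aux_quadform {d : ℕ} (X : Finset (Fin d → ℝ)) (l : (Fin d → ℝ) → ℝ)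
    (u : Fin d → ℝ) :
    u ⬝ᵥ (designMat X l).mulVec u = ∑ x ∈ X, l x * (x ⬝ᵥ u) ^ 2 := by
  simp only [designMat, Matrix.mulVec, dotProduct, Matrix.sum_apply, Matrix.smul_apply,
    Matrix.vecMulVec_apply, smul_eq_mul, Finset.sum_mul, Finset.mul_sum, pow_two]
  rw [Finset.sum_congr rfl (fun x _ => Finset.sum_comm (γ := Fin d)
    (s := Finset.univ) (t := X) (f := fun x_1 i => u x * (l i * (i x * i x_1) * u x_1)))]
  rw [Finset.sum_comm]
  refine Finset.sum_congr rfl fun x _ => ?_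
  refine Finset.sum_congr rfl fun i _ => ?_
  refine Finset.sum_congr rfl fun j _ => by ring

lemma aux_designMat_symm {d : ℕ} (X : Finset (Fin d → ℝ)) (l : (Fin d → ℝ) → ℝ) :
    (designMat X l)ᵀ = designMat X l := by
  ext i j
  simp only [designMat, Matrix.transpose_apply, Matrix.sum_apply, Matrix.smul_apply,
    Matrix.vecMulVec_apply, smul_eq_mul]
  exact Finset.sum_congr rfl fun x _ => by ring

lemma aux_quadInv_ge {d : ℕ} (X : Finset (Fin d → ℝ)) (hnorm : ∀ x ∈ X, x ⬝ᵥ x ≤ 1)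
    {l : (Fin d → ℝ) → ℝ} (hl : l ∈ designSimplex X) (hdet : IsUnit (designMat X l).det)
    (y : Fin d → ℝ) : y ⬝ᵥ y ≤ quadInv X l y := by
  set A := designMat X l with hA
  set v := A⁻¹.mulVec y with hv
  have hAv : A.mulVec v = y := by
    rw [hv, Matrix.mulVec_mulVec, Matrix.mul_nonsing_inv _ hdet, Matrix.one_mulVec]
  have hqnn : ∀ u : Fin d → ℝ, 0 ≤ u ⬝ᵥ A.mulVec u := by
    intro u
    rw [hA, aux_quadform]
    exact Finset.sum_nonneg fun x _ => mul_nonneg (hl.1 x) (sq_nonneg _)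
  have hyAv : y ⬝ᵥ A.mulVec v = y ⬝ᵥ y := by rw [hAv]
  have hvAy : v ⬝ᵥ A.mulVec y = y ⬝ᵥ y := by
    rw [Matrix.dotProduct_mulVec, ← Matrix.mulVec_transpose, hA, aux_designMat_symm,
      ← hA, hAv]
  have hquad : v ⬝ᵥ A.mulVec v = quadInv X l y := by
    rw [hAv]
    exact dotProduct_comm v y
  have hyy : (0:ℝ) ≤ y ⬝ᵥ y := Finset.sum_nonneg fun i _ => mul_self_nonneg _
  have hdisc : discrim (v ⬝ᵥ A.mulVec v) (2 * (y ⬝ᵥ y)) (y ⬝ᵥ A.mulVec y) ≤ 0 := by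
    apply discrim_le_zero
    intro t
    have expand : v ⬝ᵥ A.mulVec v * (t * t) + 2 * (y ⬝ᵥ y) * t + y ⬝ᵥ A.mulVec y
        = (y + t • v) ⬝ᵥ A.mulVec (y + t • v) := by
      simp only [Matrix.mulVec_add, Matrix.mulVec_smul, dotProduct_add,
        add_dotProduct, smul_dotProduct, dotProduct_smul, smul_eq_mul]
      rw [hyAv, hvAy]
      ring
    rw [expand]
    exact hqnn _
  have hcs : (y ⬝ᵥ y) ^ 2 ≤ (v ⬝ᵥ A.mulVec v) * (y ⬝ᵥ A.mulVec y) := by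
    have := hdisc
    rw [discrim] at this
    nlinarith [this]
  have hAyy : y ⬝ᵥ A.mulVec y ≤ y ⬝ᵥ y := by
    rw [hA, aux_quadform]
    calc ∑ x ∈ X, l x * (x ⬝ᵥ y) ^ 2 ≤ ∑ x ∈ X, l x * (y ⬝ᵥ y) := by
          refine Finset.sum_le_sum fun x hx => mul_le_mul_of_nonneg_left ?_ (hl.1 x)
          have hcs2 : (x ⬝ᵥ y) ^ 2 ≤ (x ⬝ᵥ x) * (y ⬝ᵥ y) := by
            have := Finset.sum_mul_sq_le_sq_mul_sq Finset.univ x y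
            simpa [dotProduct, pow_two, Finset.mul_sum] using this
          calc (x ⬝ᵥ y) ^ 2 ≤ (x ⬝ᵥ x) * (y ⬝ᵥ y) := hcs2
            _ ≤ 1 * (y ⬝ᵥ y) := mul_le_mul_of_nonneg_right (hnorm x hx) hyy
            _ = y ⬝ᵥ y := one_mul _
      _ = y ⬝ᵥ y := by rw [← Finset.sum_mul, hl.2, one_mul]
  have ha : 0 ≤ v ⬝ᵥ A.mulVec v := hqnn v
  rw [← hquad]
  rcases eq_or_lt_of_le hyy with h0 | h0
  · rw [← h0]; exact ha
  · nlinarith [hcs, mul_le_mul_of_nonneg_left hAyy ha]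

lemma aux_Yset_finite {d : ℕ} {S : Set (Fin d → ℝ)} (hS : S.Finite) :
    (Yset S).Finite := by
  apply Set.Finite.subset (Set.Finite.image2 (fun a b => a - b) hS hS)
  rintro y ⟨x, hx, x', hx', _, rfl⟩
  exact Set.mem_image2_of_mem hx hx'

theorem linear_Hr_geometric_growth {d : ℕ} (X : Finset (Fin d → ℝ))
    (θstar xstar : Fin d → ℝ)
    (hspan : Submodule.span ℝ (X : Set (Fin d → ℝ)) = ⊤)
    (hnorm : ∀ x ∈ X, x ⬝ᵥ x ≤ 1)
    (hxstar : xstar ∈ X)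
    (hmax : ∀ x ∈ X, x ≠ xstar → θstar ⬝ᵥ x < θstar ⬝ᵥ xstar)
    (Tbar : ℕ → ℕ) (Lbar Lhat : ℕ → ℝ) (U : ℕ → Finset (Fin d → ℝ)) (H : ℕ → ℝ)
    (R : ℕ) (hR1 : 1 ≤ R)
    (hT1 : Tbar 1 = 1)
    (hLbar : ∀ r, Lbar r = 4 ^ Tbar r)
    (hU : ∀ r, U r = X.filter (fun x => 15 / Real.sqrt (Lbar r) < θstar ⬝ᵥ (xstar - x)))
    (hH : ∀ r, H r = ∑ t ∈ Finset.Icc 1 (Tbar r), (4 : ℝ) ^ t *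
      rho X (Yset ((X : Set (Fin d → ℝ)) \
        {x | x ∈ U r ∧ 15 / 2 ^ t < θstar ⬝ᵥ (xstar - x)})))
    (hLhat : ∀ r, 1 ≤ r → r < R →
      Lhat (r + 1) = 4 * Lbar r + H r / rho X (Yset ((X : Set (Fin d → ℝ)) \ ↑(U r))))
    (hTsucc : ∀ r, 1 ≤ r → r < R →
      (4 : ℝ) ^ Tbar (r + 1) ≤ Lhat (r + 1) ∧ Lhat (r + 1) < (4 : ℝ) ^ (Tbar (r + 1) + 1))
    (hRmem : U R = X.erase xstar)
    (hRleast : ∀ r, 1 ≤ r → r < R → U r ≠ X.erase xstar) :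
    ∀ r, 1 ≤ r → r < R → U (r + 1) = U r → (5 / 4 : ℝ) * H r ≤ H (r + 1) := by
  intro r hr1 hrR hUeq
  by_cases hex : ∃ l ∈ designSimplex X, IsUnit (designMat X l).det
  swap
  · -- no admissible design: everything is zero
    have hrho0 : ∀ A : Set (Fin d → ℝ), rho X A = 0 := by
      intro A
      have hempty : {v | ∃ l ∈ designSimplex X, IsUnit (designMat X l).det ∧
          v = sSup (insert 0 (quadInv X l '' A))} = ∅ := by
        apply Set.eq_empty_iff_forall_notMem.2
        rintro v ⟨l, hl, hdet, -⟩
        exact hex ⟨l, hl, hdet⟩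
      rw [rho, hempty, Real.sInf_empty]
    have h0 : ∀ s, H s = 0 := by
      intro s
      rw [hH s]
      simp [hrho0]
    rw [h0 r, h0 (r+1)]
    norm_num
  -- main case
  obtain ⟨l₀, hl₀, hdet₀⟩ := hex
  set T := Tbar r with hT
  set T' := Tbar (r + 1) with hT'
  set ρ := rho X (Yset ((X : Set (Fin d → ℝ)) \ ↑(U r))) with hρ
  -- basic facts
  have hHrnn : 0 ≤ H r := by
    rw [hH r]
    exact Finset.sum_nonneg fun t _ => mul_nonneg (by positivity) (aux_rho_nonneg _ _)
  have hsqrtL : Real.sqrt (Lbar r) = 2 ^ T := by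
    rw [hLbar r, ← hT, show (4:ℝ) ^ T = ((2:ℝ) ^ T) ^ 2 by
      rw [← pow_mul, mul_comm, pow_mul]; norm_num]
    exact Real.sqrt_sq (by positivity)
  have hUsub : U r ⊆ X.erase xstar := by
    intro x hx
    rw [hU r] at hx
    obtain ⟨hxX, hxgt⟩ := Finset.mem_filter.1 hx
    refine Finset.mem_erase.2 ⟨?_, hxX⟩
    rintro rfl
    rw [hsqrtL] at hxgt
    simp only [sub_self, dotProduct_zero] at hxgt
    have : (0:ℝ) < 15 / 2 ^ T := by positivity
    linarith
  have hxsnotU : xstar ∉ U r := fun h => (Finset.mem_erase.1 (hUsub h)).1 rfl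
  obtain ⟨x₀, hx₀mem, hx₀notU⟩ := Finset.exists_of_ssubset
    (hUsub.ssubset_of_ne (hRleast r hr1 hrR))
  have hx₀X : x₀ ∈ X := Finset.mem_of_mem_erase hx₀mem
  have hx₀ne : x₀ ≠ xstar := Finset.ne_of_mem_erase hx₀mem
  set y₀ := xstar - x₀ with hy₀def
  have hy₀mem : y₀ ∈ Yset ((X : Set (Fin d → ℝ)) \ ↑(U r)) :=
    ⟨xstar, ⟨hxstar, fun h => hxsnotU h⟩, x₀, ⟨hx₀X, fun h => hx₀notU h⟩,
      fun h => hx₀ne h.symm, rfl⟩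
  have hy₀pos : 0 < y₀ ⬝ᵥ y₀ := by
    rcases eq_or_lt_of_le (Finset.sum_nonneg fun i (_ : i ∈ Finset.univ) =>
      mul_self_nonneg (y₀ i)) with h0 | h0
    · exfalso
      have h2 : y₀ = 0 := dotProduct_self_eq_zero.1 h0.symm
      rw [hy₀def] at h2
      exact hx₀ne (sub_eq_zero.1 h2).symm
    · exact h0
  -- positivity of ρ
  have hρpos : 0 < ρ := by
    have hne : {v | ∃ l ∈ designSimplex X, IsUnit (designMat X l).det ∧
        v = sSup (insert 0 (quadInv X l '' Yset ((X : Set (Fin d → ℝ)) \ ↑(U r))))}.Nonempty :=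
      ⟨_, l₀, hl₀, hdet₀, rfl⟩
    have hlb : y₀ ⬝ᵥ y₀ ≤ ρ := by
      rw [hρ, rho]
      apply le_csInf hne
      rintro v ⟨l, hl, hdet, rfl⟩
      have hfin : (insert (0:ℝ)
          (quadInv X l '' Yset ((X : Set (Fin d → ℝ)) \ ↑(U r)))).Finite :=
        Set.Finite.insert 0 (Set.Finite.image _
          (aux_Yset_finite (Set.Finite.subset X.finite_toSet Set.diff_subset)))
      calc y₀ ⬝ᵥ y₀ ≤ quadInv X l y₀ := aux_quadInv_ge X hnorm hl hdet y₀
        _ ≤ _ := le_csSup hfin.bddAbove (Set.mem_insert_of_mem _ ⟨y₀, hy₀mem, rfl⟩)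
    linarith
  -- the sets defining the rho-terms stabilize for t ≥ T
  have hsetT : ∀ t : ℕ, T ≤ t →
      {x | x ∈ U r ∧ 15 / (2:ℝ) ^ t < θstar ⬝ᵥ (xstar - x)} = (↑(U r) : Set (Fin d → ℝ)) := by
    intro t ht
    ext x
    simp only [Set.mem_setOf_eq, Finset.mem_coe]
    constructor
    · exact fun h => h.1
    · intro hx
      refine ⟨hx, ?_⟩
      have hx2 : x ∈ X.filter (fun x => 15 / Real.sqrt (Lbar r) < θstar ⬝ᵥ (xstar - x)) :=
        hU r ▸ hx
      have hxgt := (Finset.mem_filter.1 hx2).2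
      rw [hsqrtL] at hxgt
      calc 15 / (2:ℝ) ^ t ≤ 15 / 2 ^ T := by
            apply div_le_div_of_nonneg_left (by norm_num) (by positivity)
            exact pow_le_pow_right₀ one_le_two ht
        _ < _ := hxgt
  -- Lhat bounds
  have hL : Lhat (r + 1) = 4 * Lbar r + H r / ρ := hLhat r hr1 hrR
  have hub : Lhat (r + 1) < 4 ^ (T' + 1) := (hTsucc r hr1 hrR).2
  have h4L : 4 * Lbar r = (4:ℝ) ^ (T + 1) := by rw [hLbar r, ← hT, pow_succ]; ring
  have hdivnn : 0 ≤ H r / ρ := div_nonneg hHrnn hρpos.le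
  have hTT : T + 1 ≤ T' := by
    by_contra hc
    push_neg at hc
    have h1 : (4:ℝ) ^ (T' + 1) ≤ 4 ^ (T + 1) :=
      pow_le_pow_right₀ (by norm_num) (by omega)
    rw [hL, h4L] at hub
    linarith
  -- split the sum
  have hHr1 : H (r + 1) = H r + (((4:ℝ) ^ (T' + 1) - 4 ^ (T + 1)) / 3) * ρ := by
    rw [hH (r + 1), hUeq, hH r, ← hT, ← hT']
    have hIcc : ∀ n : ℕ, Finset.Icc 1 n = Finset.Ioc 0 n := fun n => Finset.Icc_add_one_left_eq_Ioc 0 n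
    rw [hIcc T', hIcc T]
    rw [← Finset.sum_Ioc_consecutive (fun t => (4:ℝ) ^ t *
      rho X (Yset ((X : Set (Fin d → ℝ)) \
        {x | x ∈ U r ∧ 15 / 2 ^ t < θstar ⬝ᵥ (xstar - x)})))
      (Nat.zero_le T) (by omega : T ≤ T')]
    congr 1
    have hconst : ∀ t ∈ Finset.Ioc T T', (4:ℝ) ^ t *
        rho X (Yset ((X : Set (Fin d → ℝ)) \
          {x | x ∈ U r ∧ 15 / 2 ^ t < θstar ⬝ᵥ (xstar - x)})) = (4:ℝ) ^ t * ρ := by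
      intro t ht
      rw [hsetT t (Finset.mem_Ioc.1 ht).1.le, hρ]
    rw [Finset.sum_congr rfl hconst, ← Finset.sum_mul]
    congr 1
    have : Finset.Ioc T T' = Finset.Ico (T + 1) (T' + 1) := (Finset.Ico_add_one_add_one_eq_Ioc T T').symm
    rw [this, geom_sum_Ico (by norm_num : (4:ℝ) ≠ 1) (by omega)]
    norm_num
  -- conclude
  have hkey : H r / ρ < (4:ℝ) ^ (T' + 1) - 4 ^ (T + 1) := by
    rw [hL, h4L] at hub; linarith
  have hkey2 : H r < ((4:ℝ) ^ (T' + 1) - 4 ^ (T + 1)) * ρ := by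
    rw [div_lt_iff₀ hρpos] at hkey
    linarith
  have hring : (((4:ℝ) ^ (T' + 1) - 4 ^ (T + 1)) / 3) * ρ
      = (((4:ℝ) ^ (T' + 1) - 4 ^ (T + 1)) * ρ) / 3 := by ring
  rw [hHr1, hring]
  linarith

end
end

section
/- For every r with 1 ≤ r < R_I, one has T̄_r ≤ log₂(15/Δ₂) and H_r ≤ 900 · T̄_r · ψ*; consequently H_r ≤ 900 · log₂(15/Δ₂) · ψ*. -/
open Matrix

noncomputable section

lemma vecMulVec_mulVec' {d : ℕ} (x v : Fin d → ℝ) :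
    (Matrix.vecMulVec x x) *ᵥ v = (x ⬝ᵥ v) • x := by
  ext i
  simp [Matrix.mulVec, Matrix.vecMulVec, dotProduct, Finset.mul_sum, mul_comm, mul_assoc, mul_left_comm]

lemma sum_mulVec' {d : ℕ} {s : Finset (Fin d → ℝ)} (A : (Fin d → ℝ) → Matrix (Fin d) (Fin d) ℝ)
    (v : Fin d → ℝ) : (∑ x ∈ s, A x) *ᵥ v = ∑ x ∈ s, A x *ᵥ v := by
  induction s using Finset.cons_induction with
  | empty => simp
  | cons a s ha ih => rw [Finset.sum_cons, Finset.sum_cons, Matrix.add_mulVec, ih]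

lemma designMat_quad {d : ℕ} (X : Finset (Fin d → ℝ)) (l : (Fin d → ℝ) → ℝ)
    (v : Fin d → ℝ) :
    v ⬝ᵥ (designMat X l) *ᵥ v = ∑ x ∈ X, l x * (x ⬝ᵥ v) ^ 2 := by
  rw [designMat, sum_mulVec']
  rw [show v ⬝ᵥ ∑ x ∈ X, (l x • vecMulVec x x) *ᵥ v = ∑ x ∈ X, v ⬝ᵥ (l x • vecMulVec x x) *ᵥ v
    from by induction X using Finset.cons_induction with
    | empty => simp
    | cons a s ha ih => rw [Finset.sum_cons, Finset.sum_cons, dotProduct_add, ih]]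
  refine Finset.sum_congr rfl fun x _ => ?_
  rw [Matrix.smul_mulVec, vecMulVec_mulVec', dotProduct_smul, dotProduct_smul,
    smul_eq_mul, smul_eq_mul, dotProduct_comm v x]
  ring

lemma designMat_posSemidef {d : ℕ} (X : Finset (Fin d → ℝ)) {l : (Fin d → ℝ) → ℝ}
    (hl : l ∈ designSimplex X) : (designMat X l).PosSemidef := by
  refine Matrix.PosSemidef.of_dotProduct_mulVec_nonneg ?_ ?_
  · rw [Matrix.IsHermitian]
    ext i j
    simp only [Matrix.conjTranspose_apply, designMat, Matrix.sum_apply, Matrix.smul_apply,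
      Matrix.vecMulVec_apply, star_trivial, smul_eq_mul]
    exact Finset.sum_congr rfl fun x _ => by ring
  · intro v
    simp only [star_trivial, designMat_quad]
    exact Finset.sum_nonneg fun x _ => mul_nonneg (hl.1 x) (sq_nonneg _)

lemma quadInv_nonneg {d : ℕ} (X : Finset (Fin d → ℝ)) {l : (Fin d → ℝ) → ℝ}
    (hl : l ∈ designSimplex X) (y : Fin d → ℝ) : 0 ≤ quadInv X l y := by
  have h := ((designMat_posSemidef X hl).inv).dotProduct_mulVec_nonneg y
  simpa [quadInv] using h

lemma quadInv_zero {d : ℕ} (X : Finset (Fin d → ℝ)) (l : (Fin d → ℝ) → ℝ) :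
    quadInv X l 0 = 0 := by simp [quadInv]

lemma quadInv_sub_le {d : ℕ} (X : Finset (Fin d → ℝ)) {l : (Fin d → ℝ) → ℝ}
    (hl : l ∈ designSimplex X) (a b : Fin d → ℝ) :
    quadInv X l (a - b) ≤ 2 * quadInv X l a + 2 * quadInv X l b := by
  have h4 := quadInv_nonneg X hl (a + b)
  have key : quadInv X l (a - b) + quadInv X l (a + b)
      = 2 * quadInv X l a + 2 * quadInv X l b := by
    simp only [quadInv, Matrix.mulVec_add, Matrix.mulVec_sub, dotProduct_add, dotProduct_sub,
      sub_dotProduct, add_dotProduct]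
    ring
  linarith

lemma exists_design {d : ℕ} (X : Finset (Fin d → ℝ))
    (hspan : Submodule.span ℝ (X : Set (Fin d → ℝ)) = ⊤) (hne : X.Nonempty) :
    ∃ l ∈ designSimplex X, IsUnit (designMat X l).det := by
  refine ⟨fun _ => (X.card : ℝ)⁻¹, ⟨fun x => by positivity, ?_⟩, ?_⟩
  · rw [Finset.sum_const, nsmul_eq_mul, mul_inv_cancel₀]
    exact_mod_cast Finset.card_ne_zero_of_mem hne.choose_spec
  · have hpd : (designMat X fun _ => (X.card : ℝ)⁻¹).PosDef := by
      refine Matrix.PosDef.of_dotProduct_mulVec_pos (designMat_posSemidef X ⟨fun x => by positivity, ?_⟩).1 ?_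
      · rw [Finset.sum_const, nsmul_eq_mul, mul_inv_cancel₀]
        exact_mod_cast Finset.card_ne_zero_of_mem hne.choose_spec
      · intro v hv
        simp only [star_trivial, designMat_quad]
        by_contra hle
        push_neg at hle
        have hall : ∀ x ∈ X, x ⬝ᵥ v = 0 := by
          intro x hx
          by_contra hxv
          have hpos : 0 < (X.card : ℝ)⁻¹ * (x ⬝ᵥ v) ^ 2 := by
            have : (0:ℝ) < (X.card : ℝ)⁻¹ := by
              have : 0 < X.card := Finset.card_pos.2 hne
              positivity
            positivity
          have := Finset.sum_le_sum (f := fun x : Fin d → ℝ => (0:ℝ))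
            (g := fun x => (X.card : ℝ)⁻¹ * (x ⬝ᵥ v) ^ 2)
            (fun y _ => mul_nonneg (by positivity) (sq_nonneg _))
          have hsum : 0 < ∑ x ∈ X, (X.card : ℝ)⁻¹ * (x ⬝ᵥ v) ^ 2 :=
            Finset.sum_pos' (fun y _ => mul_nonneg (by positivity) (sq_nonneg _))
              ⟨x, hx, hpos⟩
          linarith
        have hvv : ∀ u, u ∈ Submodule.span ℝ (X : Set (Fin d → ℝ)) → u ⬝ᵥ v = 0 := by
          intro u hu
          induction hu using Submodule.span_induction with
          | mem x hx => exact hall x hx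
          | zero => simp
          | add x y _ _ hx hy => rw [add_dotProduct, hx, hy, add_zero]
          | smul c x _ hx => rw [smul_dotProduct, hx, smul_zero]
        have : v ⬝ᵥ v = 0 := hvv v (by rw [hspan]; trivial)
        exact hv (dotProduct_self_eq_zero.mp this)
    exact hpd.det_pos.ne'.isUnit

lemma psiSet_nonempty {d : ℕ} (X : Finset (Fin d → ℝ)) (θstar xstar : Fin d → ℝ)
    (hspan : Submodule.span ℝ (X : Set (Fin d → ℝ)) = ⊤) (hne : X.Nonempty) :
    {v : ℝ | ∃ l ∈ designSimplex X, IsUnit (designMat X l).det ∧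
      v = sSup (insert 0
        ((fun x => quadInv X l (x - xstar) / (θstar ⬝ᵥ (xstar - x)) ^ 2) ''
          ((X : Set (Fin d → ℝ)) \ {xstar})))}.Nonempty := by
  obtain ⟨l, hl, hdet⟩ := exists_design X hspan hne
  exact ⟨_, l, hl, hdet, rfl⟩

lemma psiImg_bddAbove {d : ℕ} (X : Finset (Fin d → ℝ)) (θstar xstar : Fin d → ℝ)
    (l : (Fin d → ℝ) → ℝ) :
    BddAbove (insert 0
      ((fun x => quadInv X l (x - xstar) / (θstar ⬝ᵥ (xstar - x)) ^ 2) ''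
        ((X : Set (Fin d → ℝ)) \ {xstar}))) :=
  (((X.finite_toSet.diff).image _).insert 0).bddAbove

lemma rhoImg_bddAbove {d : ℕ} (X : Finset (Fin d → ℝ)) (l : (Fin d → ℝ) → ℝ)
    {S : Set (Fin d → ℝ)} (hS : S ⊆ (X : Set (Fin d → ℝ))) :
    BddAbove (insert 0 (quadInv X l '' Yset S)) := by
  have hY : Yset S ⊆ (fun p : (Fin d → ℝ) × (Fin d → ℝ) => p.1 - p.2) ''
      ((X : Set (Fin d → ℝ)) ×ˢ (X : Set (Fin d → ℝ))) := by
    rintro y ⟨x, hx, x', hx', hne, rfl⟩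
    exact ⟨(x, x'), ⟨hS hx, hS hx'⟩, rfl⟩
  have hfin : (Yset S).Finite :=
    (((X.finite_toSet.prod X.finite_toSet).image _)).subset hY
  exact ((hfin.image _).insert 0).bddAbove

lemma psiStar_nonneg {d : ℕ} (X : Finset (Fin d → ℝ)) (θstar xstar : Fin d → ℝ)
    (hspan : Submodule.span ℝ (X : Set (Fin d → ℝ)) = ⊤) (hne : X.Nonempty) :
    0 ≤ psiStar X θstar xstar := by
  refine le_csInf (psiSet_nonempty X θstar xstar hspan hne) ?_
  rintro v ⟨l, hl, hdet, rfl⟩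
  exact le_csSup (psiImg_bddAbove X θstar xstar l) (Set.mem_insert 0 _)

lemma rho_Yset_le {d : ℕ} (X : Finset (Fin d → ℝ)) (θstar xstar : Fin d → ℝ)
    (hspan : Submodule.span ℝ (X : Set (Fin d → ℝ)) = ⊤)
    (hxstar : xstar ∈ X)
    (hmax : ∀ x ∈ X, x ≠ xstar → θstar ⬝ᵥ x < θstar ⬝ᵥ xstar)
    {S : Set (Fin d → ℝ)} (hS : S ⊆ (X : Set (Fin d → ℝ)))
    {D : ℝ} (hD : 0 < D)
    (hgap : ∀ x ∈ S, x ≠ xstar → θstar ⬝ᵥ (xstar - x) ≤ D) :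
    rho X (Yset S) ≤ 4 * D ^ 2 * psiStar X θstar xstar := by
  have hne : X.Nonempty := ⟨xstar, hxstar⟩
  have key : ∀ v ∈ {v : ℝ | ∃ l ∈ designSimplex X, IsUnit (designMat X l).det ∧
      v = sSup (insert 0
        ((fun x => quadInv X l (x - xstar) / (θstar ⬝ᵥ (xstar - x)) ^ 2) ''
          ((X : Set (Fin d → ℝ)) \ {xstar})))},
      rho X (Yset S) ≤ 4 * D ^ 2 * v := by
    rintro v ⟨l, hl, hdet, rfl⟩
    set v := sSup (insert 0
        ((fun x => quadInv X l (x - xstar) / (θstar ⬝ᵥ (xstar - x)) ^ 2) ''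
          ((X : Set (Fin d → ℝ)) \ {xstar}))) with hv
    have hv0 : 0 ≤ v := le_csSup (psiImg_bddAbove X θstar xstar l) (Set.mem_insert 0 _)
    have hterm : ∀ z ∈ S, quadInv X l (z - xstar) ≤ D ^ 2 * v := by
      intro z hz
      by_cases hzx : z = xstar
      · subst hzx
        rw [sub_self, quadInv_zero]
        positivity
      · have hΔpos : 0 < θstar ⬝ᵥ (xstar - z) := by
          rw [dotProduct_sub]
          exact sub_pos.2 (hmax z (hS hz) hzx)
        have hmem : quadInv X l (z - xstar) / (θstar ⬝ᵥ (xstar - z)) ^ 2 ∈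
            ((fun x => quadInv X l (x - xstar) / (θstar ⬝ᵥ (xstar - x)) ^ 2) ''
              ((X : Set (Fin d → ℝ)) \ {xstar})) :=
          ⟨z, ⟨hS hz, hzx⟩, rfl⟩
        have hle : quadInv X l (z - xstar) / (θstar ⬝ᵥ (xstar - z)) ^ 2 ≤ v :=
          le_csSup (psiImg_bddAbove X θstar xstar l) (Set.mem_insert_of_mem _ hmem)
        have h1 : quadInv X l (z - xstar) ≤ v * (θstar ⬝ᵥ (xstar - z)) ^ 2 :=
          (div_le_iff₀ (by positivity)).1 hle
        have h2 : (θstar ⬝ᵥ (xstar - z)) ^ 2 ≤ D ^ 2 :=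
          pow_le_pow_left₀ hΔpos.le (hgap z hz hzx) 2
        calc quadInv X l (z - xstar) ≤ v * (θstar ⬝ᵥ (xstar - z)) ^ 2 := h1
          _ ≤ v * D ^ 2 := mul_le_mul_of_nonneg_left h2 hv0
          _ = D ^ 2 * v := by ring
    have hall : ∀ u ∈ insert 0 (quadInv X l '' Yset S), u ≤ 4 * D ^ 2 * v := by
      rintro u (rfl | ⟨y, ⟨x, hx, x', hx', hne', rfl⟩, rfl⟩)
      · positivity
      · have hsub : x - x' = (x - xstar) - (x' - xstar) := by abel
        rw [hsub]
        have h := quadInv_sub_le X hl (x - xstar) (x' - xstar)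
        have h1 := hterm x hx
        have h2 := hterm x' hx'
        nlinarith
    have hwmem : sSup (insert 0 (quadInv X l '' Yset S)) ∈
        {w : ℝ | ∃ l' ∈ designSimplex X, IsUnit (designMat X l').det ∧
          w = sSup (insert 0 (quadInv X l' '' Yset S))} := ⟨l, hl, hdet, rfl⟩
    have hbdd : BddBelow {w : ℝ | ∃ l' ∈ designSimplex X, IsUnit (designMat X l').det ∧
          w = sSup (insert 0 (quadInv X l' '' Yset S))} := by
      refine ⟨0, ?_⟩
      rintro w ⟨l', hl', hdet', rfl⟩
      exact le_csSup (rhoImg_bddAbove X l' hS) (Set.mem_insert 0 _)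
    calc rho X (Yset S) ≤ sSup (insert 0 (quadInv X l '' Yset S)) := csInf_le hbdd hwmem
      _ ≤ 4 * D ^ 2 * v := Real.sSup_le hall (by positivity)
  have hψne := psiSet_nonempty X θstar xstar hspan hne
  have h4D : (0:ℝ) < 4 * D ^ 2 := by positivity
  have : rho X (Yset S) / (4 * D ^ 2) ≤ psiStar X θstar xstar := by
    refine le_csInf hψne ?_
    intro v hv
    exact (div_le_iff₀' h4D).2 (key v hv)
  calc rho X (Yset S) = rho X (Yset S) / (4 * D ^ 2) * (4 * D ^ 2) := by field_simp
    _ ≤ psiStar X θstar xstar * (4 * D ^ 2) :=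
        mul_le_mul_of_nonneg_right this h4D.le
    _ = 4 * D ^ 2 * psiStar X θstar xstar := by ring


/-!
Definition 4.2 recursion as in the paper, `Δ₂ = min_{x ∈ X, x ≠ x*} Δ_x`.

STATEMENT 12: for every `r` with `1 ≤ r < R`, `T̄ r ≤ log₂(15/Δ₂)` and
`H r ≤ 900 T̄ r ψ*`; consequently `H r ≤ 900 log₂(15/Δ₂) ψ*`.
-/
theorem linear_Hr_upper_bound {d : ℕ} (X : Finset (Fin d → ℝ))
    (θstar xstar : Fin d → ℝ)
    (hspan : Submodule.span ℝ (X : Set (Fin d → ℝ)) = ⊤)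
    (hnorm : ∀ x ∈ X, x ⬝ᵥ x ≤ 1)
    (hxstar : xstar ∈ X)
    (hmax : ∀ x ∈ X, x ≠ xstar → θstar ⬝ᵥ x < θstar ⬝ᵥ xstar)
    (Δ₂ : ℝ)
    (hΔ₂mem : ∃ x ∈ X, x ≠ xstar ∧ Δ₂ = θstar ⬝ᵥ (xstar - x))
    (hΔ₂min : ∀ x ∈ X, x ≠ xstar → Δ₂ ≤ θstar ⬝ᵥ (xstar - x))
    (Tbar : ℕ → ℕ) (Lbar Lhat : ℕ → ℝ) (U : ℕ → Finset (Fin d → ℝ)) (H : ℕ → ℝ)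
    (R : ℕ) (hR1 : 1 ≤ R)
    (hT1 : Tbar 1 = 1)
    (hLbar : ∀ r, Lbar r = 4 ^ Tbar r)
    (hU : ∀ r, U r = X.filter (fun x => 15 / Real.sqrt (Lbar r) < θstar ⬝ᵥ (xstar - x)))
    (hH : ∀ r, H r = ∑ t ∈ Finset.Icc 1 (Tbar r), (4 : ℝ) ^ t *
      rho X (Yset ((X : Set (Fin d → ℝ)) \
        {x | x ∈ U r ∧ 15 / 2 ^ t < θstar ⬝ᵥ (xstar - x)})))
    (hLhat : ∀ r, 1 ≤ r → r < R →
      Lhat (r + 1) = 4 * Lbar r + H r / rho X (Yset ((X : Set (Fin d → ℝ)) \ ↑(U r))))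
    (hTsucc : ∀ r, 1 ≤ r → r < R →
      (4 : ℝ) ^ Tbar (r + 1) ≤ Lhat (r + 1) ∧ Lhat (r + 1) < (4 : ℝ) ^ (Tbar (r + 1) + 1))
    (hRmem : U R = X.erase xstar)
    (hRleast : ∀ r, 1 ≤ r → r < R → U r ≠ X.erase xstar) :
    ∀ r, 1 ≤ r → r < R →
      (Tbar r : ℝ) ≤ Real.logb 2 (15 / Δ₂)
      ∧ H r ≤ 900 * Tbar r * psiStar X θstar xstar
      ∧ H r ≤ 900 * Real.logb 2 (15 / Δ₂) * psiStar X θstar xstar := by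
  intro r hr1 hrR
  have hne : X.Nonempty := ⟨xstar, hxstar⟩
  have hΔ₂pos : 0 < Δ₂ := by
    obtain ⟨x₀, hx₀X, hx₀ne, hΔeq⟩ := hΔ₂mem
    rw [hΔeq, dotProduct_sub]
    exact sub_pos.2 (hmax x₀ hx₀X hx₀ne)
  have hsqrt : Real.sqrt (Lbar r) = 2 ^ Tbar r := by
    rw [hLbar r, show (4:ℝ) = 2 ^ 2 by norm_num, ← pow_mul, two_mul, pow_add,
      ← sq]
    exact Real.sqrt_sq (by positivity)
  -- Part A: Tbar r ≤ logb 2 (15/Δ₂)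
  have hA : (Tbar r : ℝ) ≤ Real.logb 2 (15 / Δ₂) := by
    have hUsub : U r ⊆ X.erase xstar := by
      intro x hx
      rw [hU r, Finset.mem_filter] at hx
      refine Finset.mem_erase.2 ⟨?_, hx.1⟩
      intro hxx
      have h0 : θstar ⬝ᵥ (xstar - x) = 0 := by rw [hxx, sub_self, dotProduct_zero]
      have hpos : 0 < 15 / Real.sqrt (Lbar r) := by
        rw [hsqrt]; positivity
      linarith [hx.2, h0 ▸ hx.2]
    have hss : U r ⊂ X.erase xstar := lt_of_le_of_ne hUsub (hRleast r hr1 hrR)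
    obtain ⟨x, hxmem, hxnot⟩ := Finset.exists_of_ssubset hss
    have hxX : x ∈ X := Finset.mem_of_mem_erase hxmem
    have hxne : x ≠ xstar := Finset.ne_of_mem_erase hxmem
    have hxle : θstar ⬝ᵥ (xstar - x) ≤ 15 / 2 ^ Tbar r := by
      by_contra hlt
      push_neg at hlt
      exact hxnot (by rw [hU r, Finset.mem_filter]; exact ⟨hxX, by rwa [hsqrt]⟩)
    have hΔ₂le : Δ₂ ≤ 15 / 2 ^ Tbar r := le_trans (hΔ₂min x hxX hxne) hxle
    have h2T : (2:ℝ) ^ Tbar r ≤ 15 / Δ₂ := by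
      rw [le_div_iff₀ hΔ₂pos]
      have h1 : Δ₂ * 2 ^ Tbar r ≤ 15 :=
        (le_div_iff₀ (by positivity : (0:ℝ) < 2 ^ Tbar r)).1 hΔ₂le
      linarith
    calc (Tbar r : ℝ) = Real.logb 2 (2 ^ Tbar r) := by
          rw [Real.logb_pow, Real.logb_self_eq_one (by norm_num : (1:ℝ) < 2)]
          ring
      _ ≤ Real.logb 2 (15 / Δ₂) :=
          Real.logb_le_logb_of_le (by norm_num) (by positivity) h2T
  -- Part B : H r ≤ 900 * Tbar r * psiStar
  set ψ := psiStar X θstar xstar with hψdef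
  have hψ0 : 0 ≤ ψ := psiStar_nonneg X θstar xstar hspan hne
  have hB : H r ≤ 900 * Tbar r * ψ := by
    rw [hH r]
    have hterm : ∀ t ∈ Finset.Icc 1 (Tbar r), (4:ℝ) ^ t *
        rho X (Yset ((X : Set (Fin d → ℝ)) \
          {x | x ∈ U r ∧ 15 / 2 ^ t < θstar ⬝ᵥ (xstar - x)})) ≤ 900 * ψ := by
      intro t ht
      rw [Finset.mem_Icc] at ht
      set S := (X : Set (Fin d → ℝ)) \
        {x | x ∈ U r ∧ 15 / 2 ^ t < θstar ⬝ᵥ (xstar - x)} with hSdef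
      have hSsub : S ⊆ (X : Set (Fin d → ℝ)) := Set.diff_subset
      have hD : (0:ℝ) < 15 / 2 ^ t := by positivity
      have hgap : ∀ x ∈ S, x ≠ xstar → θstar ⬝ᵥ (xstar - x) ≤ 15 / 2 ^ t := by
        intro x hx _
        by_contra hlt
        push_neg at hlt
        refine hx.2 ⟨?_, hlt⟩
        rw [hU r, Finset.mem_filter]
        refine ⟨hx.1, ?_⟩
        have h2le : (2:ℝ) ^ t ≤ 2 ^ Tbar r :=
          pow_le_pow_right₀ (by norm_num) ht.2
        have : 15 / Real.sqrt (Lbar r) ≤ 15 / 2 ^ t := by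
          rw [hsqrt]
          exact div_le_div_of_nonneg_left (by norm_num) (by positivity) h2le
        linarith
      have hrho := rho_Yset_le X θstar xstar hspan hxstar hmax hSsub hD hgap
      have hrw : (4:ℝ) ^ t * (4 * (15 / 2 ^ t) ^ 2 * ψ) = 900 * ψ := by
        have h4 : (4:ℝ) ^ t = ((2:ℝ) ^ t) ^ 2 := by
          rw [show (4:ℝ) = 2 ^ 2 by norm_num, ← pow_mul, ← pow_mul, mul_comm]
        rw [h4]
        have h2pos : (0:ℝ) < 2 ^ t := by positivity
        field_simp
        norm_num
        ring
      calc (4:ℝ) ^ t * rho X (Yset S) ≤ (4:ℝ) ^ t * (4 * (15 / 2 ^ t) ^ 2 * ψ) :=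
            mul_le_mul_of_nonneg_left hrho (by positivity)
        _ = 900 * ψ := hrw
    calc (∑ t ∈ Finset.Icc 1 (Tbar r), (4:ℝ) ^ t *
        rho X (Yset ((X : Set (Fin d → ℝ)) \
          {x | x ∈ U r ∧ 15 / 2 ^ t < θstar ⬝ᵥ (xstar - x)})))
        ≤ ∑ _t ∈ Finset.Icc 1 (Tbar r), 900 * ψ := Finset.sum_le_sum hterm
      _ = (Tbar r : ℝ) * (900 * ψ) := by
          rw [Finset.sum_const, Nat.card_Icc, nsmul_eq_mul]
          norm_num
      _ = 900 * Tbar r * ψ := by ring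
  refine ⟨hA, hB, ?_⟩
  calc H r ≤ 900 * Tbar r * ψ := hB
    _ ≤ 900 * Real.logb 2 (15 / Δ₂) * ψ := by
        apply mul_le_mul_of_nonneg_right _ hψ0
        nlinarith [hA]
end
end
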